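/- Let (Ω, ℱ, P) be a probability space, A : Ω → ℝ and Y : Ω → [0,1] measurable, v ∈ ℝ with P(A ≥ v) > 0. Let D : Ω → ℝ be bounded measurable with E[D] = 0, and for |ε| < 1/(‖D‖_∞ + 1) let P_ε := (1 + εD)·P. Define Ψᵘ(μ) := E_μ[Y·1{A ≥ v}]/μ(A ≥ v). Then ε ↦ Ψᵘ(P_ε) is differentiable at ε = 0 with derivative E[D·D̃₀], where D̃₀ := (1{A ≥ v}/P(A ≥ v))·(Y − E[Y·1{A ≥ v}]/P(A ≥ v)) is the efficient influence function of the unadjusted threshold-response. -/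

import Mathlib

open MeasureTheory ProbabilityTheory
open scoped NNReal ENNReal

/-- the unadjusted threshold-response `Ψᵘ(μ) = E_μ[Y·1{A ≥ v}]/μ(A ≥ v)` is
pathwise differentiable along `P_ε = (1 + εD)·P` at `ε = 0` with derivative `E[D·D̃₀]`,
where `D̃₀` is its efficient influence function. -/
theorem stmt8 {Ω : Type*} [MeasurableSpace Ω] (μ : Measure Ω) [IsProbabilityMeasure μ]
    (A Y : Ω → ℝ) (hAmeas : Measurable A) (hYmeas : Measurable Y)
    (hY01 : ∀ ω, Y ω ∈ Set.Icc (0 : ℝ) 1)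
    (v : ℝ) (hpos : 0 < μ {ω | v ≤ A ω})
    (D : Ω → ℝ) (hDmeas : Measurable D) (C : ℝ) (hDbound : ∀ ω, |D ω| ≤ C)
    (hDmean : ∫ ω, D ω ∂μ = 0)
    (Pe : ℝ → Measure Ω)
    (hPe : ∀ ε, Pe ε = μ.withDensity (fun ω => ENNReal.ofReal (1 + ε * D ω)))
    (Ψu : Measure Ω → ℝ)
    (hΨu : ∀ ν : Measure Ω, Ψu ν =
      (∫ ω, Y ω * (if v ≤ A ω then (1 : ℝ) else 0) ∂ν) / (ν {ω | v ≤ A ω}).toReal)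
    (D₀ : Ω → ℝ)
    (hD₀ : D₀ = fun ω =>
      ((if v ≤ A ω then (1 : ℝ) else 0) / (μ {ω' | v ≤ A ω'}).toReal) *
        (Y ω - (∫ ω', Y ω' * (if v ≤ A ω' then (1 : ℝ) else 0) ∂μ) /
          (μ {ω' | v ≤ A ω'}).toReal)) :
    HasDerivAt (fun ε => Ψu (Pe ε)) (∫ ω, D ω * D₀ ω ∂μ) 0 := by
  classical
  have hΩ : Nonempty Ω := by
    by_contra h
    rw [not_nonempty_iff] at h
    have h1 : μ Set.univ = 1 := measure_univ
    rw [Set.univ_eq_empty_iff.mpr h] at h1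
    simp at h1
  have hC0 : (0 : ℝ) ≤ C := le_trans (abs_nonneg _) (hDbound hΩ.some)
  set S : Set Ω := {ω | v ≤ A ω} with hSdef
  have hS : MeasurableSet S := hAmeas measurableSet_Ici
  set ind : Ω → ℝ := fun ω => if v ≤ A ω then (1 : ℝ) else 0 with hinddef
  have hindmeas : Measurable ind := Measurable.ite hS measurable_const measurable_const
  have hindbd : ∀ ω, |ind ω| ≤ 1 := by
    intro ω; simp only [hinddef]; split <;> simp
  set f : Ω → ℝ := fun ω => Y ω * ind ω with hfdef
  have hfmeas : Measurable f := hYmeas.mul hindmeas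
  have hfbd : ∀ ω, |f ω| ≤ 1 := by
    intro ω
    have h1 := (hY01 ω).1; have h2 := (hY01 ω).2
    simp only [hfdef, hinddef, abs_mul]
    split <;> simp [abs_of_nonneg h1] <;> linarith
  -- measure of S via indicator integral
  have hindint : ∀ ν : Measure Ω, ∫ ω, ind ω ∂ν = (ν S).toReal := by
    intro ν
    have : ind = S.indicator (1 : Ω → ℝ) := by
      funext ω; simp [hinddef, Set.indicator_apply, hSdef, Set.mem_setOf_eq]
    rw [this]; exact integral_indicator_one hS
  -- integrability of bounded measurable functions
  have hint : ∀ (g : Ω → ℝ), Measurable g → ∀ K : ℝ, (∀ ω, |g ω| ≤ K) → Integrable g μ := by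
    intro g hg K hK
    exact (integrable_const K).mono' hg.aestronglyMeasurable
      (ae_of_all _ fun ω => by simpa using hK ω)
  set M : ℝ := (μ S).toReal with hMdef
  have hM : 0 < M := ENNReal.toReal_pos hpos.ne' (measure_ne_top μ S)
  set N : ℝ := ∫ ω, f ω ∂μ with hNdef
  set N' : ℝ := ∫ ω, D ω * f ω ∂μ with hN'def
  set M' : ℝ := ∫ ω, D ω * ind ω ∂μ with hM'def
  set r : ℝ := (C + 1)⁻¹ with hrdef
  have hr : 0 < r := by positivity
  -- key: integral wrt Pe ε for small ε
  have hwd : ∀ ε : ℝ, |ε| ≤ r → ∀ g : Ω → ℝ, Measurable g → (∀ ω, |g ω| ≤ 1) →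
      ∫ ω, g ω ∂(Pe ε) = (∫ ω, g ω ∂μ) + ε * ∫ ω, D ω * g ω ∂μ := by
    intro ε hε g hg hgbd
    have hnn : ∀ ω, 0 ≤ 1 + ε * D ω := by
      intro ω
      have h1 : |ε * D ω| ≤ r * C := by
        rw [abs_mul]
        exact mul_le_mul hε (hDbound ω) (abs_nonneg _) hr.le
      have h2 : r * C ≤ 1 := by
        rw [hrdef]
        rw [inv_mul_le_iff₀ (by positivity)]
        nlinarith
      have := abs_le.mp (h1.trans h2)
      linarith [this.1]
    rw [hPe]
    have heq : (fun ω => ENNReal.ofReal (1 + ε * D ω))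
        = fun ω => (((1 + ε * D ω).toNNReal : ℝ≥0) : ℝ≥0∞) := rfl
    rw [heq, integral_withDensity_eq_integral_smul
      (show Measurable (fun ω => (1 + ε * D ω).toNNReal) from
        (measurable_const.add (measurable_const.mul hDmeas)).real_toNNReal) g]
    have : ∀ ω, (1 + ε * D ω).toNNReal • g ω = g ω + ε * (D ω * g ω) := by
      intro ω
      rw [NNReal.smul_def, Real.coe_toNNReal _ (hnn ω), smul_eq_mul]
      ring
    rw [integral_congr_ae (ae_of_all _ this)]
    rw [integral_add (hint g hg 1 hgbd)
      (((hint _ (hDmeas.mul hg) C ?_).const_mul ε).congr (ae_of_all _ fun ω => by simp only [Pi.mul_apply]))]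
    · rw [integral_const_mul]
    · intro ω
      rw [Pi.mul_apply, abs_mul]
      calc |D ω| * |g ω| ≤ C * 1 := mul_le_mul (hDbound ω) (hgbd ω) (abs_nonneg _) hC0
        _ = C := mul_one C
  -- eventual equality with a rational function
  have hev : (fun ε => Ψu (Pe ε)) =ᶠ[nhds 0] fun ε => (N + ε * N') / (M + ε * M') := by
    filter_upwards [Metric.ball_mem_nhds 0 hr] with ε hε
    have hεr : |ε| ≤ r := by
      rw [Metric.mem_ball, Real.dist_eq, sub_zero] at hε; exact hε.le
    rw [hΨu]
    have hnum : ∫ ω, f ω ∂(Pe ε) = N + ε * N' := hwd ε hεr f hfmeas hfbd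
    have hden : ((Pe ε) S).toReal = M + ε * M' := by
      rw [← hindint (Pe ε), hwd ε hεr ind hindmeas hindbd, hindint μ, ← hMdef, ← hM'def]
    rw [hnum, hden]
  -- derivative of the rational function
  have h1 : HasDerivAt (fun ε : ℝ => N + ε * N') N' 0 :=
    (hasDerivAt_mul_const N').const_add N
  have h2 : HasDerivAt (fun ε : ℝ => M + ε * M') M' 0 :=
    (hasDerivAt_mul_const M').const_add M
  have hd0 : M + 0 * M' ≠ 0 := by simpa using hM.ne'
  have hq := h1.div h2 hd0
  have hqval : (N' * (M + 0 * M') - (N + 0 * N') * M') / (M + 0 * M') ^ 2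
      = (N' * M - N * M') / M ^ 2 := by ring_nf
  rw [hqval] at hq
  -- compute the influence-function integral
  have hDf : Integrable (fun ω => D ω * f ω) μ := by
    apply hint _ (hDmeas.mul hfmeas) C
    intro ω
    rw [Pi.mul_apply, abs_mul]
    calc |D ω| * |f ω| ≤ C * 1 := mul_le_mul (hDbound ω) (hfbd ω) (abs_nonneg _) hC0
      _ = C := mul_one C
  have hDind : Integrable (fun ω => D ω * ind ω) μ := by
    apply hint _ (hDmeas.mul hindmeas) C
    intro ω
    rw [Pi.mul_apply, abs_mul]
    calc |D ω| * |ind ω| ≤ C * 1 := mul_le_mul (hDbound ω) (hindbd ω) (abs_nonneg _) hC0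
      _ = C := mul_one C
  have hEIF : ∫ ω, D ω * D₀ ω ∂μ = (N' * M - N * M') / M ^ 2 := by
    have hexp : ∀ ω, D ω * D₀ ω
        = M⁻¹ * (D ω * f ω) - (N / M ^ 2) * (D ω * ind ω) := by
      intro ω
      rw [hD₀]
      simp only [hfdef, hinddef]
      by_cases h : v ≤ A ω <;> simp only [h, if_true, if_false] <;> field_simp <;> ring
    rw [integral_congr_ae (ae_of_all _ hexp),
      integral_sub (hDf.const_mul _) (hDind.const_mul _),
      integral_const_mul, integral_const_mul, ← hN'def, ← hM'def]
    field_simp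
  rw [hEIF]
  exact hq.congr_of_eventuallyEq hev
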